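/- Suppose the drift assumption and the diffusion assumption hold. Then for every p ≥ 1 there exists a constant C_p > 0 such that for every x ∈ ℝ^d, every α ∈ (0, 1/2), every η ∈ (0, 1], and every s ∈ (0, η], if ξ is a random vector with Gaussian distribution N( x + s b(x)/(1 + η^α ‖∇b(x)‖_op), s σ(x)σ(x)^T ), then E|ξ − x|^p ≤ C_p s^{p/2} (1 + |x|^{r+1})^p. -/

import Mathlib

open MeasureTheory Real
open scoped RealInnerProductSpace

/-- The operator (spectral) norm of a real matrix, viewed as a linear map on
Euclidean space. -/
noncomputable def matOpNorm {d : ℕ} (A : Matrix (Fin d) (Fin d) ℝ) : ℝ :=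
  ‖LinearMap.toContinuousLinearMap (Matrix.toEuclideanLin A)‖

/-- The Gaussian measure on `ℝ^d` with mean `μ` and (positive definite) covariance
matrix `Γ`, defined through its density with respect to Lebesgue measure. -/
noncomputable def gaussianMeasure {d : ℕ} (μ : EuclideanSpace ℝ (Fin d))
    (Γ : Matrix (Fin d) (Fin d) ℝ) : Measure (EuclideanSpace ℝ (Fin d)) :=
  volume.withDensity fun x =>
    ENNReal.ofReal (Real.sqrt (((2 * π) ^ d * Γ.det))⁻¹ *
      Real.exp (-⟪x - μ, Matrix.toEuclideanLin Γ⁻¹ (x - μ)⟫ / 2))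

lemma matOpNorm_nonneg {d : ℕ} (A : Matrix (Fin d) (Fin d) ℝ) : 0 ≤ matOpNorm A :=
  norm_nonneg _

lemma norm_toEuclideanLin_le {d : ℕ} (A : Matrix (Fin d) (Fin d) ℝ)
    (v : EuclideanSpace ℝ (Fin d)) :
    ‖Matrix.toEuclideanLin A v‖ ≤ matOpNorm A * ‖v‖ := by
  have h := (LinearMap.toContinuousLinearMap (Matrix.toEuclideanLin A)).le_opNorm v
  rw [LinearMap.coe_toContinuousLinearMap'] at h
  exact h

lemma abs_det_le_matOpNorm_pow {d : ℕ} (A : Matrix (Fin d) (Fin d) ℝ) :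
    |A.det| ≤ matOpNorm A ^ d := by
  set E := EuclideanSpace ℝ (Fin d)
  have hdet : LinearMap.det (Matrix.toEuclideanLin A) = A.det := by
    rw [Matrix.toEuclideanLin_eq_toLin, LinearMap.det_toLin]
  have himg : (Matrix.toEuclideanLin A) '' (Metric.closedBall (0:E) 1) ⊆
      Metric.closedBall (0:E) (matOpNorm A) := by
    rintro y ⟨v, hv, rfl⟩
    simp only [Metric.mem_closedBall, dist_zero_right] at hv ⊢
    calc ‖Matrix.toEuclideanLin A v‖ ≤ matOpNorm A * ‖v‖ := norm_toEuclideanLin_le A v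
      _ ≤ matOpNorm A * 1 := mul_le_mul_of_nonneg_left hv (matOpNorm_nonneg A)
      _ = matOpNorm A := mul_one _
  have h1 := MeasureTheory.Measure.addHaar_image_linearMap (volume : Measure E)
    (Matrix.toEuclideanLin A) (Metric.closedBall 0 1)
  have h2 : (volume : Measure E) ((Matrix.toEuclideanLin A) '' (Metric.closedBall 0 1))
      ≤ volume (Metric.closedBall (0:E) (matOpNorm A)) := measure_mono himg
  rw [h1, MeasureTheory.Measure.addHaar_closedBall _ _ (matOpNorm_nonneg A),
    MeasureTheory.Measure.addHaar_closedBall _ _ (zero_le_one)] at h2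
  have hrank : Module.finrank ℝ E = d := finrank_euclideanSpace_fin
  rw [hrank] at h2
  simp only [one_pow, ENNReal.ofReal_one, one_mul] at h2
  have hball0 : (volume : Measure E) (Metric.ball 0 1) ≠ 0 :=
    (Metric.measure_ball_pos _ _ one_pos).ne'
  have hballtop : (volume : Measure E) (Metric.ball 0 1) ≠ ⊤ :=
    measure_ball_lt_top.ne
  have h3 : ENNReal.ofReal |A.det| ≤ ENNReal.ofReal (matOpNorm A ^ d) := by
    rw [hdet] at h2
    exact (ENNReal.mul_le_mul_iff_left hball0 hballtop).1 h2
  rwa [ENNReal.ofReal_le_ofReal_iff (pow_nonneg (matOpNorm_nonneg A) d)] at h3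

lemma rpow_le_rpow_mul_exp {v q : ℝ} (hv : 0 ≤ v) (hq : 0 < q) :
    v ^ q ≤ q ^ q * Real.exp v := by
  have h1 : v / q ≤ Real.exp (v / q) := by
    have := Real.add_one_le_exp (v / q); linarith
  have h2 : (v / q) ^ q ≤ (Real.exp (v / q)) ^ q :=
    Real.rpow_le_rpow (by positivity) h1 hq.le
  rw [Real.div_rpow hv hq.le, ← Real.exp_mul, div_mul_cancel₀ _ hq.ne'] at h2
  have hq' : (0:ℝ) < q ^ q := Real.rpow_pos_of_pos hq q
  rw [div_le_iff₀ hq'] at h2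
  linarith [h2]

lemma integrable_gauss {d : ℕ} {a : ℝ} (ha : 0 < a) :
    Integrable (fun v : EuclideanSpace ℝ (Fin d) => Real.exp (-a * ‖v‖^2)) := by
  have h := GaussianFourier.integrable_cexp_neg_mul_sq_norm_add
    (V := EuclideanSpace ℝ (Fin d)) (b := (a:ℂ)) (by simpa using ha) 0 0
  have h2 := h.re
  simp only [zero_mul, add_zero] at h2
  convert h2 using 2 with v
  rw [show (-(a:ℂ) * (‖v‖:ℂ)^2) = ((-a * ‖v‖^2 : ℝ) : ℂ) by push_cast; ring,
    ← Complex.ofReal_exp]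
  rfl

set_option maxHeartbeats 2000000 in
theorem stmt14 {d : ℕ} (r L₁ lam L₂ : ℝ) (hr : 0 ≤ r) (hL₁ : 0 < L₁) (hlam : 0 < lam)
    (hL₂ : 0 < L₂)
    (b : EuclideanSpace ℝ (Fin d) → EuclideanSpace ℝ (Fin d))
    (σ : EuclideanSpace ℝ (Fin d) → Matrix (Fin d) (Fin d) ℝ)
    -- drift assumption
    (hb : ContDiff ℝ 1 b)
    (hdissip : ∀ x, ⟪x, b x⟫ ≤ L₁ - lam * ‖x‖ ^ (r + 2))
    (hgrowth : ∀ x, ‖b x‖ ≤ L₁ * (1 + ‖x‖ * ‖fderiv ℝ b x‖))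
    (hlip : ∀ x y, ‖b x - b y‖ ≤ L₁ * (1 + ‖x‖ ^ r + ‖y‖ ^ r) * ‖x - y‖)
    -- diffusion assumption (σ viewed as a map into linear operators on ℝ^d)
    (hσ : ContDiff ℝ 2
      (fun y => LinearMap.toContinuousLinearMap (Matrix.toEuclideanLin (σ y))))
    (hσinv : ∀ x, IsUnit (σ x))
    (hσbd : ∀ x, matOpNorm (σ x) ≤ L₂)
    (hσinvbd : ∀ x, matOpNorm (σ x)⁻¹ ≤ L₂)
    (hσder : ∀ x, ‖fderiv ℝ
      (fun y => LinearMap.toContinuousLinearMap (Matrix.toEuclideanLin (σ y))) x‖ ≤ L₂)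
    (hσder2 : ∀ x, ‖iteratedFDeriv ℝ 2
      (fun y => LinearMap.toContinuousLinearMap (Matrix.toEuclideanLin (σ y))) x‖ ≤ L₂) :
    ∀ p : ℝ, 1 ≤ p → ∃ C > 0,
      ∀ (x : EuclideanSpace ℝ (Fin d)) (α η s : ℝ),
        0 < α → α < 1 / 2 → 0 < η → η ≤ 1 → 0 < s → s ≤ η →
        ∫ z, ‖z - x‖ ^ p
            ∂(gaussianMeasure (x + (s / (1 + η ^ α * ‖fderiv ℝ b x‖)) • b x)
              (s • (σ x * (σ x).transpose)))
          ≤ C * s ^ (p / 2) * (1 + ‖x‖ ^ (r + 1)) ^ p := by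
  intro p hp
  have hp0 : (0:ℝ) < p := lt_of_lt_of_le one_pos hp
  refine ⟨2 ^ p * (L₂ ^ d * (2 * L₂ ^ 2) ^ ((d:ℝ)/2)) *
    ((2 * p * L₂ ^ 2) ^ (p/2) + (2 * L₁) ^ p), by positivity, ?_⟩
  intro x α η s hα hα2 hη0 hη1 hs0 hsη
  set N := ‖fderiv ℝ b x‖ with hN
  have hN0 : 0 ≤ N := norm_nonneg _
  set A := σ x with hA
  set m := x + (s / (1 + η ^ α * N)) • b x with hm
  set Γ := s • (A * A.transpose) with hΓ
  set c := s * L₂ ^ 2 with hc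
  have hc0 : (0:ℝ) < c := by positivity
  set a := (4*c)⁻¹ with ha
  have ha0 : (0:ℝ) < a := by positivity
  set D := ‖(s / (1 + η ^ α * N)) • b x‖ with hD
  set B := ‖x‖ ^ (r+1) with hB
  have hB0 : (0:ℝ) ≤ B := Real.rpow_nonneg (norm_nonneg x) _
  set c₀ := Real.sqrt (((2 * π) ^ d * Γ.det))⁻¹ with hc₀
  set CC := c₀ * (2 ^ p * ((2*p*c) ^ (p/2) + D ^ p)) with hCC
  -- determinant facts
  have hdetA : IsUnit A.det := by
    rw [hA]; exact (Matrix.isUnit_iff_isUnit_det _).mp (hσinv x)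
  have hdetAT : IsUnit A.transpose.det := by rwa [Matrix.det_transpose]
  have hdetAinv : |A⁻¹.det| ≤ L₂ ^ d := by
    rw [hA]
    exact le_trans (abs_det_le_matOpNorm_pow _)
      (pow_le_pow_left₀ (matOpNorm_nonneg _) (hσinvbd x) d)
  have hL2d : (0:ℝ) < L₂ ^ d := by positivity
  have hmulone : |A⁻¹.det| * |A.det| = 1 := by
    rw [← abs_mul, Matrix.det_nonsing_inv_mul_det _ hdetA, abs_one]
  have hinvpos : 0 < |A⁻¹.det| := by
    rcases (abs_nonneg A⁻¹.det).lt_or_eq with h | h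
    · exact h
    · exfalso; rw [← h, zero_mul] at hmulone; norm_num at hmulone
  have hdetAlow : (L₂ ^ d)⁻¹ ≤ |A.det| := by
    have h4 : |A.det| = |A⁻¹.det|⁻¹ :=
      eq_inv_of_mul_eq_one_left (by rw [mul_comm]; exact hmulone)
    rw [h4]
    exact inv_anti₀ hinvpos hdetAinv
  have hΓdet : Γ.det = s ^ d * A.det ^ 2 := by
    rw [hΓ, Matrix.det_smul, Matrix.det_mul, Matrix.det_transpose, Fintype.card_fin]
    ring
  -- constant bound
  have h2πs : (0:ℝ) < 2*π*s := by positivity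
  have hπ4c : π / a = 4*π*c := by rw [ha, div_eq_mul_inv, inv_inv]; ring
  have hconst : c₀ * (4*π*c) ^ ((d:ℝ)/2) ≤ L₂ ^ d * (2*L₂^2) ^ ((d:ℝ)/2) := by
    have hY : (0:ℝ) < (2*π*s)^d * ((L₂^d)⁻¹)^2 := by positivity
    have hlow : (2*π*s)^d * ((L₂^d)⁻¹)^2 ≤ (2*π)^d * Γ.det := by
      have hmp : (2*π*s)^d = (2*π)^d * s^d := mul_pow _ _ d
      have hsq : ((L₂^d)⁻¹)^2 ≤ A.det ^ 2 := by
        rw [← sq_abs A.det]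
        exact pow_le_pow_left₀ (by positivity) hdetAlow 2
      rw [hΓdet, hmp]
      calc (2*π)^d * s^d * ((L₂^d)⁻¹)^2 ≤ (2*π)^d * s^d * A.det^2 := by
            apply mul_le_mul_of_nonneg_left hsq (by positivity)
        _ = (2*π)^d * (s^d * A.det^2) := by ring
    have hsqrt1 : Real.sqrt ((2*π*s)^d) = (2*π*s) ^ ((d:ℝ)/2) := by
      rw [Real.sqrt_eq_rpow, ← Real.rpow_natCast (2*π*s) d, ← Real.rpow_mul h2πs.le]
      congr 1
      ring
    have h1 : c₀ ≤ ((2*π*s) ^ ((d:ℝ)/2))⁻¹ * L₂ ^ d := by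
      have hinvle : ((2*π)^d * Γ.det)⁻¹ ≤ ((2*π*s)^d * ((L₂^d)⁻¹)^2)⁻¹ :=
        inv_anti₀ hY hlow
      calc c₀ ≤ Real.sqrt (((2*π*s)^d * ((L₂^d)⁻¹)^2)⁻¹) := Real.sqrt_le_sqrt hinvle
        _ = ((2*π*s) ^ ((d:ℝ)/2))⁻¹ * L₂ ^ d := by
            rw [mul_inv, inv_pow, inv_inv,
              Real.sqrt_mul (inv_nonneg.2 (by positivity)) ((L₂^d)^2),
              Real.sqrt_inv, hsqrt1, Real.sqrt_sq hL2d.le]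
    have h2 : (4*π*c) ^ ((d:ℝ)/2) = (2*π*s) ^ ((d:ℝ)/2) * (2*L₂^2) ^ ((d:ℝ)/2) := by
      rw [← Real.mul_rpow h2πs.le (by positivity)]
      congr 1
      rw [hc]; ring
    have hppos : (0:ℝ) < (2*π*s) ^ ((d:ℝ)/2) := Real.rpow_pos_of_pos h2πs _
    calc c₀ * (4*π*c) ^ ((d:ℝ)/2)
        ≤ (((2*π*s) ^ ((d:ℝ)/2))⁻¹ * L₂ ^ d) * ((2*π*s) ^ ((d:ℝ)/2) * (2*L₂^2) ^ ((d:ℝ)/2)) := by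
          rw [h2]
          apply mul_le_mul_of_nonneg_right h1 (by positivity)
      _ = L₂ ^ d * (2*L₂^2) ^ ((d:ℝ)/2) := by
          field_simp
  -- inverse of covariance matrix and quadratic form
  have hΓinv : Γ⁻¹ = s⁻¹ • (A.transpose⁻¹ * A⁻¹) := by
    apply Matrix.inv_eq_right_inv
    rw [hΓ, Matrix.smul_mul, Matrix.mul_smul, smul_smul, mul_inv_cancel₀ hs0.ne', one_smul,
      ← Matrix.mul_assoc, Matrix.mul_nonsing_inv_cancel_right _ _ hdetAT,
      Matrix.mul_nonsing_inv _ hdetA]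
  have hQ : ∀ w : EuclideanSpace ℝ (Fin d), ‖w‖^2 / c ≤ ⟪w, Matrix.toEuclideanLin Γ⁻¹ w⟫ := by
    intro w
    have hTA : Matrix.toEuclideanLin A (Matrix.toEuclideanLin A⁻¹ w) = w := by
      rw [Matrix.toEuclideanLin_apply, Matrix.toEuclideanLin_apply]
      simp [Matrix.mulVec_mulVec, Matrix.mul_nonsing_inv _ hdetA]
    have hwle : ‖w‖ ≤ L₂ * ‖Matrix.toEuclideanLin A⁻¹ w‖ := by
      conv_lhs => rw [← hTA]
      calc ‖Matrix.toEuclideanLin A (Matrix.toEuclideanLin A⁻¹ w)‖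
          ≤ matOpNorm A * ‖Matrix.toEuclideanLin A⁻¹ w‖ := norm_toEuclideanLin_le _ _
        _ ≤ L₂ * ‖Matrix.toEuclideanLin A⁻¹ w‖ := by
            apply mul_le_mul_of_nonneg_right _ (norm_nonneg _)
            rw [hA]; exact hσbd x
    have hinner : ⟪w, Matrix.toEuclideanLin Γ⁻¹ w⟫
        = s⁻¹ * ‖Matrix.toEuclideanLin A⁻¹ w‖^2 := by
      rw [hΓinv]
      simp only [_root_.map_smul, LinearMap.smul_apply, real_inner_smul_right]
      congr 1
      have hmul : Matrix.toEuclideanLin (A.transpose⁻¹ * A⁻¹) w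
          = Matrix.toEuclideanLin A.transpose⁻¹ (Matrix.toEuclideanLin A⁻¹ w) := by
        rw [Matrix.toEuclideanLin_apply, Matrix.toEuclideanLin_apply,
          Matrix.toEuclideanLin_apply]
        simp [Matrix.mulVec_mulVec]
      rw [hmul, ← Matrix.transpose_nonsing_inv]
      have hct : (A⁻¹).transpose = (A⁻¹).conjTranspose := by
        ext i j
        simp [Matrix.conjTranspose_apply]
      rw [hct, Matrix.toEuclideanLin_conjTranspose_eq_adjoint,
        LinearMap.adjoint_inner_right, real_inner_self_eq_norm_sq]
    rw [hinner]
    have hsq : ‖w‖^2 ≤ L₂^2 * ‖Matrix.toEuclideanLin A⁻¹ w‖^2 := by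
      have h2' : ‖w‖*‖w‖ ≤ (L₂*‖Matrix.toEuclideanLin A⁻¹ w‖)*(L₂*‖Matrix.toEuclideanLin A⁻¹ w‖) :=
        mul_self_le_mul_self (norm_nonneg w) hwle
      calc ‖w‖^2 = ‖w‖*‖w‖ := by ring
        _ ≤ (L₂*‖Matrix.toEuclideanLin A⁻¹ w‖)*(L₂*‖Matrix.toEuclideanLin A⁻¹ w‖) := h2'
        _ = L₂^2 * ‖Matrix.toEuclideanLin A⁻¹ w‖^2 := by ring
    rw [div_le_iff₀ hc0, hc]
    have hss : s⁻¹ * ‖Matrix.toEuclideanLin A⁻¹ w‖^2 * (s * L₂^2)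
        = L₂^2 * ‖Matrix.toEuclideanLin A⁻¹ w‖^2 := by
      field_simp
    rw [hss]
    exact hsq
  -- mean displacement bound
  have hηα0 : (0:ℝ) < η ^ α := Real.rpow_pos_of_pos hη0 _
  have hden : (0:ℝ) < 1 + η ^ α * N := by positivity
  have hs1 : s ≤ 1 := hsη.trans hη1
  have hsqs : Real.sqrt s ≤ η ^ α := by
    have h1 : Real.sqrt s ≤ Real.sqrt η := Real.sqrt_le_sqrt hsη
    have h2 : Real.sqrt η = η ^ ((1:ℝ)/2) := Real.sqrt_eq_rpow η
    have h3 : η ^ ((1:ℝ)/2) ≤ η ^ α :=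
      Real.rpow_le_rpow_of_exponent_ge hη0 hη1 (by linarith)
    linarith
  have hssqrt : s ≤ Real.sqrt s := by
    have hsq2 : s^2 ≤ s := by
      calc s^2 = s*s := by ring
        _ ≤ s*1 := mul_le_mul_of_nonneg_left hs1 hs0.le
        _ = s := mul_one s
    have h1 : Real.sqrt (s^2) ≤ Real.sqrt s := Real.sqrt_le_sqrt hsq2
    rwa [Real.sqrt_sq hs0.le] at h1
  have hxB : ‖x‖ ≤ 1 + B := by
    rcases le_total ‖x‖ 1 with h | h
    · linarith
    · have h1 : ‖x‖ ^ (1:ℝ) ≤ ‖x‖ ^ (r+1) :=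
        Real.rpow_le_rpow_of_exponent_le h (by linarith)
      rw [Real.rpow_one] at h1
      rw [hB]; linarith
  have hDbd : D ≤ 2 * L₁ * Real.sqrt s * (1 + B) := by
    have hD1 : D = (s / (1 + η ^ α * N)) * ‖b x‖ := by
      rw [hD, norm_smul, Real.norm_eq_abs, abs_of_pos (div_pos hs0 hden)]
    have hb1 : ‖b x‖ ≤ L₁ * (1 + ‖x‖ * N) := hgrowth x
    have e1 : Real.sqrt s * Real.sqrt s = s := Real.mul_self_sqrt hs0.le
    have inner1 : s * (1 + ‖x‖ * N) ≤ Real.sqrt s * (1 + ‖x‖) * (1 + Real.sqrt s * N) := by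
      have expand : Real.sqrt s * (1 + ‖x‖) * (1 + Real.sqrt s * N)
          = Real.sqrt s * (1 + ‖x‖) + s * (N * (1 + ‖x‖)) := by
        calc Real.sqrt s * (1 + ‖x‖) * (1 + Real.sqrt s * N)
            = Real.sqrt s * (1 + ‖x‖) + (Real.sqrt s * Real.sqrt s) * (N * (1 + ‖x‖)) := by
              ring
          _ = Real.sqrt s * (1 + ‖x‖) + s * (N * (1 + ‖x‖)) := by rw [e1]
      rw [expand]
      have f1 : Real.sqrt s ≤ Real.sqrt s * (1 + ‖x‖) :=
        le_mul_of_one_le_right (Real.sqrt_nonneg s) (by linarith [norm_nonneg x])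
      have f2 : s * (‖x‖ * N) ≤ s * (N * (1 + ‖x‖)) := by
        apply mul_le_mul_of_nonneg_left _ hs0.le
        calc ‖x‖ * N = N * ‖x‖ := mul_comm _ _
          _ ≤ N * (1 + ‖x‖) := mul_le_mul_of_nonneg_left (by linarith [norm_nonneg x]) hN0
      have f3 : s ≤ Real.sqrt s * (1 + ‖x‖) := hssqrt.trans f1
      calc s * (1 + ‖x‖ * N) = s + s * (‖x‖ * N) := by ring
        _ ≤ Real.sqrt s * (1 + ‖x‖) + s * (N * (1 + ‖x‖)) := add_le_add f3 f2
    have hkey2 : s * (L₁ * (1 + ‖x‖ * N)) ≤ L₁ * Real.sqrt s * (1 + ‖x‖) * (1 + η^α * N) := by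
      calc s * (L₁ * (1 + ‖x‖ * N)) = L₁ * (s * (1 + ‖x‖ * N)) := by ring
        _ ≤ L₁ * (Real.sqrt s * (1 + ‖x‖) * (1 + Real.sqrt s * N)) :=
            mul_le_mul_of_nonneg_left inner1 hL₁.le
        _ ≤ L₁ * (Real.sqrt s * (1 + ‖x‖) * (1 + η^α * N)) := by
            apply mul_le_mul_of_nonneg_left _ hL₁.le
            apply mul_le_mul_of_nonneg_left _ (by positivity)
            exact add_le_add (le_refl 1) (mul_le_mul_of_nonneg_right hsqs hN0)
        _ = L₁ * Real.sqrt s * (1 + ‖x‖) * (1 + η^α * N) := by ring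
    have hstep : D ≤ L₁ * Real.sqrt s * (1 + ‖x‖) := by
      rw [hD1, div_mul_eq_mul_div, div_le_iff₀ hden]
      calc s * ‖b x‖ ≤ s * (L₁ * (1 + ‖x‖ * N)) :=
            mul_le_mul_of_nonneg_left hb1 hs0.le
        _ ≤ L₁ * Real.sqrt s * (1 + ‖x‖) * (1 + η^α * N) := hkey2
    calc D ≤ L₁ * Real.sqrt s * (1 + ‖x‖) := hstep
      _ ≤ L₁ * Real.sqrt s * (2 * (1 + B)) := by
          apply mul_le_mul_of_nonneg_left (by linarith)
            (by positivity)
      _ = 2 * L₁ * Real.sqrt s * (1 + B) := by ring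
  -- measurability
  have hT : Continuous fun z : EuclideanSpace ℝ (Fin d) => Matrix.toEuclideanLin Γ⁻¹ (z - m) := by
    have h1 := (LinearMap.toContinuousLinearMap (Matrix.toEuclideanLin Γ⁻¹)).continuous
    rw [LinearMap.coe_toContinuousLinearMap'] at h1
    exact h1.comp (continuous_id.sub continuous_const)
  have hgcont : Continuous fun z : EuclideanSpace ℝ (Fin d) =>
      c₀ * Real.exp (-⟪z - m, Matrix.toEuclideanLin Γ⁻¹ (z - m)⟫ / 2) := by
    apply continuous_const.mul
    apply Real.continuous_exp.comp
    apply Continuous.div_const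
    exact (((continuous_id.sub continuous_const).inner hT)).neg
  have hgmeas : Measurable fun z : EuclideanSpace ℝ (Fin d) =>
      ENNReal.ofReal (c₀ * Real.exp (-⟪z - m, Matrix.toEuclideanLin Γ⁻¹ (z - m)⟫ / 2)) :=
    ENNReal.measurable_ofReal.comp hgcont.measurable
  have hfcont : Continuous fun z : EuclideanSpace ℝ (Fin d) => ‖z - x‖ ^ p :=
    (continuous_id.sub continuous_const).norm.rpow_const (fun z => Or.inr hp0.le)
  have hfmeas : Measurable fun z : EuclideanSpace ℝ (Fin d) => ENNReal.ofReal (‖z - x‖ ^ p) :=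
    ENNReal.measurable_ofReal.comp hfcont.measurable
  -- with density
  have hwd : ∫⁻ z, ENNReal.ofReal (‖z - x‖ ^ p) ∂(gaussianMeasure m Γ)
      = ∫⁻ z, (ENNReal.ofReal
          (c₀ * Real.exp (-⟪z - m, Matrix.toEuclideanLin Γ⁻¹ (z - m)⟫ / 2)))
          * ENNReal.ofReal (‖z - x‖ ^ p) ∂volume := by
    rw [gaussianMeasure, lintegral_withDensity_eq_lintegral_mul volume hgmeas hfmeas]
    rfl
  -- pointwise bound
  have hpt : ∀ z : EuclideanSpace ℝ (Fin d), (ENNReal.ofReal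
        (c₀ * Real.exp (-⟪z - m, Matrix.toEuclideanLin Γ⁻¹ (z - m)⟫ / 2)))
        * ENNReal.ofReal (‖z - x‖ ^ p)
      ≤ ENNReal.ofReal (CC * Real.exp (-(a * ‖z - m‖^2))) := by
    intro z
    have hc₀nn : 0 ≤ c₀ := Real.sqrt_nonneg _
    rw [← ENNReal.ofReal_mul (by positivity)]
    apply ENNReal.ofReal_le_ofReal
    set w := z - m with hw
    -- exp bound
    have he : Real.exp (-⟪w, Matrix.toEuclideanLin Γ⁻¹ w⟫ / 2)
        ≤ Real.exp (-(2 * (a * ‖w‖^2))) := by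
      apply Real.exp_le_exp.2
      have hq := hQ w
      have harith : ‖w‖^2 / c / 2 = 2 * (a * ‖w‖^2) := by
        rw [ha]; field_simp; ring
      linarith [hq, harith.symm.le]
    -- norm bound
    have hzx : ‖z - x‖ ≤ ‖w‖ + D := by
      have hzd : z - x = w + (m - x) := by rw [hw]; abel
      have hmx : m - x = (s / (1 + η ^ α * N)) • b x := by rw [hm]; abel
      rw [hzd, hmx]
      exact norm_add_le _ _
    have hD0 : 0 ≤ D := norm_nonneg _
    have hzxp : ‖z - x‖ ^ p ≤ 2^p * (‖w‖^p + D^p) := by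
      have h1 : ‖z - x‖ ≤ 2 * max ‖w‖ D := by
        rcases le_total ‖w‖ D with h | h
        · have := le_max_right ‖w‖ D; have h2 := max_eq_right h; linarith [hzx]
        · have h2 := max_eq_left h; linarith [hzx]
      have h2 : ‖z - x‖^p ≤ (2 * max ‖w‖ D)^p :=
        Real.rpow_le_rpow (norm_nonneg _) h1 hp0.le
      have h3 : (2 * max ‖w‖ D)^p = 2^p * (max ‖w‖ D)^p :=
        Real.mul_rpow (by norm_num) (le_max_of_le_left (norm_nonneg _))
      have h4 : (max ‖w‖ D)^p ≤ ‖w‖^p + D^p := by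
        rcases max_cases ‖w‖ D with ⟨hhe, _⟩ | ⟨hhe, _⟩ <;> rw [hhe]
        · linarith [Real.rpow_nonneg hD0 p]
        · linarith [Real.rpow_nonneg (norm_nonneg w) p]
      calc ‖z - x‖^p ≤ 2^p * (max ‖w‖ D)^p := by rw [← h3]; exact h2
        _ ≤ 2^p * (‖w‖^p + D^p) :=
            mul_le_mul_of_nonneg_left h4 (Real.rpow_nonneg (by norm_num) p)
    -- moment bound
    have hwp : ‖w‖^p ≤ (2*p*c)^(p/2) * Real.exp (a * ‖w‖^2) := by
      have hv0 : (0:ℝ) ≤ a * ‖w‖^2 := by positivity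
      have hvq := rpow_le_rpow_mul_exp hv0 (by linarith : (0:ℝ) < p/2)
      have hnp : ‖w‖ ^ p = (‖w‖^2 : ℝ) ^ (p/2) := by
        rw [← Real.rpow_natCast ‖w‖ 2, ← Real.rpow_mul (norm_nonneg w)]
        congr 1
        push_cast; ring
      have hsplit : (‖w‖^2 : ℝ) ^ (p/2) = (a * ‖w‖^2)^(p/2) * (a⁻¹)^(p/2) := by
        rw [← Real.mul_rpow hv0 (by positivity)]
        congr 1
        field_simp
      have hcmb : ((p/2) : ℝ)^(p/2) * (a⁻¹)^(p/2) = (2*p*c)^(p/2) := by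
        rw [← Real.mul_rpow (by positivity) (by positivity)]
        congr 1
        rw [ha, inv_inv]; ring
      calc ‖w‖^p = (a * ‖w‖^2)^(p/2) * (a⁻¹)^(p/2) := by rw [hnp, hsplit]
        _ ≤ ((p/2)^(p/2) * Real.exp (a * ‖w‖^2)) * (a⁻¹)^(p/2) :=
            mul_le_mul_of_nonneg_right hvq (Real.rpow_nonneg (by positivity) _)
        _ = (2*p*c)^(p/2) * Real.exp (a * ‖w‖^2) := by rw [← hcmb]; ring
    -- combine
    have hexp2 : Real.exp (a*‖w‖^2) * Real.exp (-(2*(a * ‖w‖^2))) = Real.exp (-(a*‖w‖^2)) := by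
      rw [← Real.exp_add]; congr 1; ring
    have hexple : Real.exp (-(2*(a * ‖w‖^2))) ≤ Real.exp (-(a*‖w‖^2)) := by
      apply Real.exp_le_exp.2; nlinarith [sq_nonneg ‖w‖, ha0.le]
    have hbig : c₀ * Real.exp (-⟪w, Matrix.toEuclideanLin Γ⁻¹ w⟫ / 2) * ‖z - x‖ ^ p
        ≤ CC * Real.exp (-(a * ‖w‖^2)) := by
      have s1 : c₀ * Real.exp (-⟪w, Matrix.toEuclideanLin Γ⁻¹ w⟫ / 2) * ‖z - x‖ ^ p
          ≤ c₀ * Real.exp (-(2*(a * ‖w‖^2))) * (2^p * (‖w‖^p + D^p)) := by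
        apply mul_le_mul
        · exact mul_le_mul_of_nonneg_left he hc₀nn
        · exact hzxp
        · exact Real.rpow_nonneg (norm_nonneg _) p
        · positivity
      have s2 : c₀ * Real.exp (-(2*(a * ‖w‖^2))) * (2^p * (‖w‖^p + D^p))
          ≤ CC * Real.exp (-(a * ‖w‖^2)) := by
        rw [hCC]
        have t1 : ‖w‖^p * Real.exp (-(2*(a * ‖w‖^2)))
            ≤ (2*p*c)^(p/2) * Real.exp (-(a*‖w‖^2)) := by
          calc ‖w‖^p * Real.exp (-(2*(a * ‖w‖^2)))
              ≤ ((2*p*c)^(p/2) * Real.exp (a * ‖w‖^2)) * Real.exp (-(2*(a * ‖w‖^2))) :=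
                mul_le_mul_of_nonneg_right hwp (Real.exp_pos _).le
            _ = (2*p*c)^(p/2) * (Real.exp (a*‖w‖^2) * Real.exp (-(2*(a * ‖w‖^2)))) := by ring
            _ = (2*p*c)^(p/2) * Real.exp (-(a*‖w‖^2)) := by rw [hexp2]
        have t2 : D^p * Real.exp (-(2*(a * ‖w‖^2))) ≤ D^p * Real.exp (-(a*‖w‖^2)) :=
          mul_le_mul_of_nonneg_left hexple (Real.rpow_nonneg hD0 p)
        have t3 : (0:ℝ) ≤ c₀ * 2^p := by positivity
        calc c₀ * Real.exp (-(2*(a * ‖w‖^2))) * (2^p * (‖w‖^p + D^p))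
            = (c₀ * 2^p) * (‖w‖^p * Real.exp (-(2*(a * ‖w‖^2)))
              + D^p * Real.exp (-(2*(a * ‖w‖^2)))) := by ring
          _ ≤ (c₀ * 2^p) * ((2*p*c)^(p/2) * Real.exp (-(a*‖w‖^2))
              + D^p * Real.exp (-(a*‖w‖^2))) := by
                apply mul_le_mul_of_nonneg_left _ t3
                linarith
          _ = c₀ * (2 ^ p * ((2*p*c) ^ (p/2) + D ^ p)) * Real.exp (-(a * ‖w‖^2)) := by
                ring
      exact s1.trans s2
    exact hbig
  -- integral of the majorant
  have hCCnn : 0 ≤ CC := by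
    apply mul_nonneg (Real.sqrt_nonneg _)
    apply mul_nonneg (Real.rpow_nonneg (by norm_num) p)
    exact add_nonneg (Real.rpow_nonneg (by positivity) _)
      (Real.rpow_nonneg (norm_nonneg _) _)
  have hint : Integrable (fun z : EuclideanSpace ℝ (Fin d) => Real.exp (-(a * ‖z‖^2))) := by
    have := integrable_gauss (d := d) ha0
    simpa [neg_mul] using this
  have hgval : ∫ z : EuclideanSpace ℝ (Fin d), Real.exp (-(a * ‖z‖^2)) = (π/a) ^ ((d:ℝ)/2) := by
    have h := GaussianFourier.integral_rexp_neg_mul_sq_norm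
      (V := EuclideanSpace ℝ (Fin d)) ha0
    simp only [neg_mul] at h
    rw [h, finrank_euclideanSpace_fin]
  have hmexp : Measurable fun z : EuclideanSpace ℝ (Fin d) => ENNReal.ofReal (Real.exp (-(a * ‖z - m‖^2))) := by
    apply ENNReal.measurable_ofReal.comp
    apply Continuous.measurable
    apply Real.continuous_exp.comp
    exact (continuous_const.mul ((continuous_id.sub continuous_const).norm.pow 2)).neg
  have hmaj : ∫⁻ z : EuclideanSpace ℝ (Fin d), ENNReal.ofReal (CC * Real.exp (-(a * ‖z - m‖^2))) ∂volume
      = ENNReal.ofReal CC * ENNReal.ofReal ((π/a) ^ ((d:ℝ)/2)) := by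
    simp_rw [ENNReal.ofReal_mul hCCnn]
    rw [lintegral_const_mul _ hmexp]
    congr 1
    have htrans : ∫⁻ z : EuclideanSpace ℝ (Fin d), ENNReal.ofReal (Real.exp (-(a * ‖z - m‖^2))) ∂volume
        = ∫⁻ z : EuclideanSpace ℝ (Fin d), ENNReal.ofReal (Real.exp (-(a * ‖z‖^2))) ∂volume := by
      have := lintegral_add_right_eq_self
        (μ := (volume : Measure (EuclideanSpace ℝ (Fin d))))
        (f := fun z : EuclideanSpace ℝ (Fin d) => ENNReal.ofReal (Real.exp (-(a * ‖z‖^2)))) (-m)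
      simp_rw [← sub_eq_add_neg] at this
      exact this
    rw [htrans, ← ofReal_integral_eq_lintegral_ofReal hint
      (ae_of_all _ fun z => (Real.exp_pos _).le), hgval]
  -- final constant estimate
  have hfinal : CC * (π/a) ^ ((d:ℝ)/2)
      ≤ (2 ^ p * (L₂ ^ d * (2 * L₂ ^ 2) ^ ((d:ℝ)/2)) *
        ((2 * p * L₂ ^ 2) ^ (p/2) + (2 * L₁) ^ p)) * s ^ (p/2) * (1 + B)^p := by
    have hsp2 : (0:ℝ) ≤ s ^ (p/2) := Real.rpow_nonneg hs0.le _
    have honeB : (1:ℝ) ≤ (1+B)^p := by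
      calc (1:ℝ) = 1 ^ p := (Real.one_rpow p).symm
        _ ≤ (1+B)^p := Real.rpow_le_rpow (by norm_num) (by linarith) hp0.le
    have h2pc : (2*p*c)^(p/2) = (2*p*L₂^2)^(p/2) * s^(p/2) := by
      rw [← Real.mul_rpow (by positivity) hs0.le]
      congr 1
      rw [hc]; ring
    have hsqrtp : (Real.sqrt s) ^ p = s ^ (p/2) := by
      rw [Real.sqrt_eq_rpow, ← Real.rpow_mul hs0.le]
      congr 1; ring
    have hDp : D^p ≤ (2*L₁)^p * (s^(p/2) * (1+B)^p) := by
      calc D^p ≤ (2 * L₁ * Real.sqrt s * (1 + B))^p :=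
            Real.rpow_le_rpow (norm_nonneg _) hDbd hp0.le
        _ = (2*L₁)^p * ((Real.sqrt s)^p * (1+B)^p) := by
            rw [Real.mul_rpow (by positivity) (by linarith),
              Real.mul_rpow (by positivity) (Real.sqrt_nonneg s)]
            ring
        _ = (2*L₁)^p * (s^(p/2) * (1+B)^p) := by rw [hsqrtp]
    have hX2 : (2*p*c)^(p/2) + D^p
        ≤ ((2*p*L₂^2)^(p/2) + (2*L₁)^p) * (s^(p/2) * (1+B)^p) := by
      have u1 : (2*p*c)^(p/2) ≤ (2*p*L₂^2)^(p/2) * (s^(p/2) * (1+B)^p) := by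
        rw [h2pc]
        have : s^(p/2) = s^(p/2) * 1 := (mul_one _).symm
        calc (2*p*L₂^2)^(p/2) * s^(p/2)
            = (2*p*L₂^2)^(p/2) * (s^(p/2) * 1) := by ring
          _ ≤ (2*p*L₂^2)^(p/2) * (s^(p/2) * (1+B)^p) := by
              apply mul_le_mul_of_nonneg_left _ (Real.rpow_nonneg (by positivity) _)
              exact mul_le_mul_of_nonneg_left honeB hsp2
      linarith [hDp, u1]
    have hπac : (π/a) ^ ((d:ℝ)/2) = (4*π*c) ^ ((d:ℝ)/2) := by rw [hπ4c]
    rw [hπac, hCC]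
    have hrw : c₀ * (2 ^ p * ((2*p*c) ^ (p/2) + D ^ p)) * (4*π*c) ^ ((d:ℝ)/2)
        = 2^p * (((2*p*c) ^ (p/2) + D ^ p) * (c₀ * (4*π*c) ^ ((d:ℝ)/2))) := by ring
    rw [hrw]
    have h2p0 : (0:ℝ) ≤ 2^p := Real.rpow_nonneg (by norm_num) p
    have hE2nn : (0:ℝ) ≤ L₂ ^ d * (2*L₂^2) ^ ((d:ℝ)/2) := by positivity
    have hfac1 : ((2*p*c) ^ (p/2) + D ^ p) * (c₀ * (4*π*c) ^ ((d:ℝ)/2))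
        ≤ (((2*p*L₂^2)^(p/2) + (2*L₁)^p) * (s^(p/2) * (1+B)^p))
          * (L₂ ^ d * (2*L₂^2) ^ ((d:ℝ)/2)) := by
      apply mul_le_mul hX2 hconst
      · positivity
      · positivity
    calc 2^p * (((2*p*c) ^ (p/2) + D ^ p) * (c₀ * (4*π*c) ^ ((d:ℝ)/2)))
        ≤ 2^p * ((((2*p*L₂^2)^(p/2) + (2*L₁)^p) * (s^(p/2) * (1+B)^p))
          * (L₂ ^ d * (2*L₂^2) ^ ((d:ℝ)/2))) := mul_le_mul_of_nonneg_left hfac1 h2p0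
      _ = (2 ^ p * (L₂ ^ d * (2 * L₂ ^ 2) ^ ((d:ℝ)/2)) *
          ((2 * p * L₂ ^ 2) ^ (p/2) + (2 * L₁) ^ p)) * s ^ (p/2) * (1 + B)^p := by ring
  -- conclude
  have hkey : ∫⁻ z, ENNReal.ofReal (‖z - x‖ ^ p) ∂(gaussianMeasure m Γ)
      ≤ ENNReal.ofReal ((2 ^ p * (L₂ ^ d * (2 * L₂ ^ 2) ^ ((d:ℝ)/2)) *
        ((2 * p * L₂ ^ 2) ^ (p/2) + (2 * L₁) ^ p)) * s ^ (p/2) * (1 + B)^p) := by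
    rw [hwd]
    refine le_trans (lintegral_mono hpt) ?_
    rw [hmaj, ← ENNReal.ofReal_mul hCCnn]
    exact ENNReal.ofReal_le_ofReal hfinal
  have hfm : AEStronglyMeasurable (fun z : EuclideanSpace ℝ (Fin d) => ‖z - x‖ ^ p) (gaussianMeasure m Γ) :=
    hfcont.aestronglyMeasurable
  rw [MeasureTheory.integral_eq_lintegral_of_nonneg_ae
    (ae_of_all _ fun z => Real.rpow_nonneg (norm_nonneg _) p) hfm]
  apply ENNReal.toReal_le_of_le_ofReal _ hkey
  have : (0:ℝ) ≤ (2 ^ p * (L₂ ^ d * (2 * L₂ ^ 2) ^ ((d:ℝ)/2)) *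
      ((2 * p * L₂ ^ 2) ^ (p/2) + (2 * L₁) ^ p)) := by positivity
  have hsp : (0:ℝ) ≤ s ^ (p/2) := Real.rpow_nonneg hs0.le _
  have hBp : (0:ℝ) ≤ (1+B)^p := Real.rpow_nonneg (by linarith) _
  positivity
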